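/- Let f : ℝⁿ → ℝⁿ be continuous, φ : ℝⁿ → ℝ continuous, and suppose there exist a continuously differentiable V : ℝⁿ → ℝ and a constant U such that f(x)·∇V(x) + φ(x) − U ≤ 0 for all x ∈ ℝⁿ. Then for every bounded solution x(t) of ẋ = f(x) (with both x(t) and V(x(t)) bounded in time), limsup_{T→∞} (1/T) ∫₀ᵀ φ(x(t)) dt ≤ U. -/

import Mathlib

open Filter intervalIntegral

/-- upper bound on time averages via a storage function.
If `f·∇V + φ - U ≤ 0` everywhere, then along any bounded solution of `ẋ = f(x)`,
`limsup (1/T) ∫₀ᵀ φ(x(t)) dt ≤ U`. -/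
theorem time_average_upper_bound
    {n : ℕ} (f : (Fin n → ℝ) → (Fin n → ℝ)) (φ : (Fin n → ℝ) → ℝ)
    (V : (Fin n → ℝ) → ℝ) (U : ℝ)
    (hf : Continuous f) (hφ : Continuous φ) (hV : ContDiff ℝ 1 V)
    (hineq : ∀ x : Fin n → ℝ, fderiv ℝ V x (f x) + φ x - U ≤ 0)
    (x : ℝ → (Fin n → ℝ))
    (hsol : ∀ t : ℝ, HasDerivAt x (f (x t)) t)
    (hbdd : ∃ M : ℝ, ∀ t : ℝ, 0 ≤ t → ‖x t‖ ≤ M ∧ |V (x t)| ≤ M) :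
    Filter.limsup (fun T : ℝ => (1 / T) * ∫ t in (0:ℝ)..T, φ (x t)) atTop ≤ U := by
  obtain ⟨M, hM⟩ := hbdd
  have hM0 : 0 ≤ M := (norm_nonneg (x 0)).trans (hM 0 le_rfl).1
  have hx_cont : Continuous x := by
    rw [continuous_iff_continuousAt]; exact fun t => (hsol t).continuousAt
  set g' : ℝ → ℝ := fun t => fderiv ℝ V (x t) (f (x t)) with hg'
  have hg : ∀ t : ℝ, HasDerivAt (fun t => V (x t)) (g' t) t := fun t =>
    ((hV.differentiable one_ne_zero (x t)).hasFDerivAt).comp_hasDerivAt t (hsol t)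
  have hg'_cont : Continuous g' :=
    ((hV.continuous_fderiv one_ne_zero).comp hx_cont).clm_apply (hf.comp hx_cont)
  set u : ℝ → ℝ := fun T => (1 / T) * ∫ t in (0:ℝ)..T, φ (x t) with hu
  set v : ℝ → ℝ := fun T => U + 2 * M * (1 / T) with hv
  have hint : ∀ T : ℝ, IntervalIntegrable (fun t => φ (x t)) MeasureTheory.volume 0 T :=
    fun T => ((hφ.comp hx_cont)).intervalIntegrable 0 T
  have key : ∀ T : ℝ, 1 ≤ T → u T ≤ v T := by
    intro T hT
    have hT0 : (0:ℝ) < T := lt_of_lt_of_le one_pos hT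
    have hftc : ∫ t in (0:ℝ)..T, g' t = V (x T) - V (x 0) :=
      intervalIntegral.integral_eq_sub_of_hasDerivAt
        (fun t _ => hg t) (hg'_cont.intervalIntegrable 0 T)
    have h1 : ∫ t in (0:ℝ)..T, φ (x t) ≤ ∫ t in (0:ℝ)..T, (U - g' t) := by
      apply intervalIntegral.integral_mono_on hT0.le (hint T)
        ((continuous_const.sub hg'_cont).intervalIntegrable 0 T)
      intro t _
      have := hineq (x t)
      simp only [hg', Pi.sub_apply]; linarith
    have h2 : ∫ t in (0:ℝ)..T, (U - g' t) = U * T - (V (x T) - V (x 0)) := by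
      rw [intervalIntegral.integral_sub
        (intervalIntegrable_const) (hg'_cont.intervalIntegrable 0 T), hftc,
        intervalIntegral.integral_const]
      simp [smul_eq_mul]
      ring
    have hVT := abs_le.1 (hM T hT0.le).2
    have hV0 := abs_le.1 (hM 0 le_rfl).2
    have h3 : ∫ t in (0:ℝ)..T, φ (x t) ≤ U * T + 2 * M := by
      rw [h2] at h1; linarith
    have := mul_le_mul_of_nonneg_left h3 (le_of_lt (one_div_pos.2 hT0))
    calc u T ≤ (1 / T) * (U * T + 2 * M) := this
      _ = v T := by
          simp only [hv]
          field_simp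
          try ring
  have hkey' : ∀ᶠ T in atTop, u T ≤ v T := by
    filter_upwards [eventually_ge_atTop (1:ℝ)] with T hT using key T hT
  obtain ⟨y, hy, hyc⟩ : ∃ y ∈ Metric.closedBall (0 : Fin n → ℝ) M,
      IsMinOn φ (Metric.closedBall (0 : Fin n → ℝ) M) y :=
    (isCompact_closedBall 0 M).exists_isMinOn ⟨0, by simpa using hM0⟩ hφ.continuousOn
  have hφlow : ∀ t : ℝ, 0 ≤ t → φ y ≤ φ (x t) := fun t ht =>
    hyc (by simpa [Metric.mem_closedBall, dist_eq_norm] using (hM t ht).1)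
  have hlb : ∀ᶠ T in atTop, φ y ≤ u T := by
    filter_upwards [eventually_ge_atTop (1:ℝ)] with T hT
    have hT0 : (0:ℝ) < T := lt_of_lt_of_le one_pos hT
    have h4 : T * φ y ≤ ∫ t in (0:ℝ)..T, φ (x t) := by
      have := intervalIntegral.integral_mono_on hT0.le intervalIntegrable_const (hint T)
        (fun t ht => hφlow t ht.1)
      simpa [smul_eq_mul] using this
    have := mul_le_mul_of_nonneg_left h4 (le_of_lt (one_div_pos.2 hT0))
    calc φ y = (1 / T) * (T * φ y) := by field_simp
      _ ≤ u T := this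
  have hvlim : Tendsto v atTop (nhds U) := by
    rw [hv]
    have h0 : Tendsto (fun T : ℝ => 2 * M * (1 / T)) atTop (nhds 0) := by
      simpa using tendsto_inv_atTop_zero.const_mul (2 * M)
    simpa using (tendsto_const_nhds (x := U) (f := (atTop : Filter ℝ))).add h0
  have h1 : limsup u atTop ≤ limsup v atTop :=
    limsup_le_limsup hkey' (isCoboundedUnder_le_of_eventually_le atTop hlb)
      hvlim.isBoundedUnder_le
  calc limsup u atTop ≤ limsup v atTop := h1
    _ = U := hvlim.limsup_eq
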